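/- Let B be a Boolean algebra, S a finite subset of B closed under meet ⊓ and containing ⊤, □ : B → B a map satisfying the modal axioms (m.i) and (m.ii), and p a finitely additive probability on B. Define the belief Bel(φ) = p(□φ) and the basic belief assignment m(φ) = p(φ^□) for φ ∈ S. Then for every φ ∈ S, Bel(φ) = ∑_{ψ∈S, ψ≤φ} m(ψ), and equivalently m(φ) = Bel(φ) − ∑_{ψ∈S, ψ<φ} m(ψ). -/
import Mathlib

open scoped Classical

/-- The basic propositional assignment (bpa) of `φ`:
`φ^□ = □φ ⊓ (⊔_{ψ ∈ S, ψ < φ} □ψ)ᶜ`. -/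
noncomputable def bpa {B : Type*} [BooleanAlgebra B]
    (S : Finset B) (box : B → B) (φ : B) : B :=
  box φ ⊓ ((S.filter fun ψ => ψ < φ).sup box)ᶜ

section Aux
variable {B : Type*} [BooleanAlgebra B]

lemma box_mono (box : B → B) (mi : box ⊤ = ⊤)
    (mii : ∀ x y : B, box (xᶜ ⊔ y) ≤ (box x)ᶜ ⊔ box y)
    {x y : B} (h : x ≤ y) : box x ≤ box y := by
  have h1 : xᶜ ⊔ y = ⊤ := by
    rw [eq_top_iff, ← compl_sup_eq_top (x := x)]
    exact sup_le_sup_left h _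
  have h2 : (⊤ : B) ≤ (box x)ᶜ ⊔ box y := by rw [← mi, ← h1]; exact mii x y
  calc box x = box x ⊓ ((box x)ᶜ ⊔ box y) := by rw [top_unique h2, inf_top_eq]
    _ = (box x ⊓ (box x)ᶜ) ⊔ (box x ⊓ box y) := inf_sup_left _ _ _
    _ ≤ box y := by simp

lemma box_inf (box : B → B) (mi : box ⊤ = ⊤)
    (mii : ∀ x y : B, box (xᶜ ⊔ y) ≤ (box x)ᶜ ⊔ box y)
    (x y : B) : box x ⊓ box y ≤ box (x ⊓ y) := by
  have h1 : box y ≤ box (xᶜ ⊔ (x ⊓ y)) := by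
    apply box_mono box mi mii
    calc y = (xᶜ ⊓ y) ⊔ (x ⊓ y) := by
            rw [← inf_sup_right, compl_sup_eq_top, top_inf_eq]
      _ ≤ xᶜ ⊔ (x ⊓ y) := sup_le_sup inf_le_left le_rfl
  have h2 : box y ≤ (box x)ᶜ ⊔ box (x ⊓ y) := h1.trans (mii x (x ⊓ y))
  calc box x ⊓ box y ≤ box x ⊓ ((box x)ᶜ ⊔ box (x ⊓ y)) := inf_le_inf_left _ h2
    _ = (box x ⊓ (box x)ᶜ) ⊔ (box x ⊓ box (x ⊓ y)) := inf_sup_left _ _ _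
    _ ≤ box (x ⊓ y) := by simp

/-- One-sided disjointness: if `φ ⊓ ψ ∈ S` and `φ ⊓ ψ < φ`, the bpas are disjoint. -/
lemma bpa_disj_aux (S : Finset B) (box : B → B)
    (mi : box ⊤ = ⊤) (mii : ∀ x y : B, box (xᶜ ⊔ y) ≤ (box x)ᶜ ⊔ box y)
    {φ ψ : B} (hχS : φ ⊓ ψ ∈ S) (h1 : φ ⊓ ψ < φ) :
    bpa S box φ ⊓ bpa S box ψ = ⊥ := by
  have hc : bpa S box φ ≤ (box (φ ⊓ ψ))ᶜ :=
    inf_le_right.trans (compl_le_compl (Finset.le_sup (Finset.mem_filter.2 ⟨hχS, h1⟩)))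
  have hb : bpa S box φ ⊓ bpa S box ψ ≤ box (φ ⊓ ψ) :=
    (inf_le_inf inf_le_left inf_le_left).trans (box_inf box mi mii φ ψ)
  have := le_inf hb ((inf_le_left : bpa S box φ ⊓ bpa S box ψ ≤ _).trans hc)
  simpa using this

lemma bpa_disj (S : Finset B) (hmeet : ∀ x ∈ S, ∀ y ∈ S, x ⊓ y ∈ S) (box : B → B)
    (mi : box ⊤ = ⊤) (mii : ∀ x y : B, box (xᶜ ⊔ y) ≤ (box x)ᶜ ⊔ box y)
    {φ ψ : B} (hφ : φ ∈ S) (hψ : ψ ∈ S) (hne : φ ≠ ψ) :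
    bpa S box φ ⊓ bpa S box ψ = ⊥ := by
  have hχS : φ ⊓ ψ ∈ S := hmeet φ hφ ψ hψ
  rcases lt_or_eq_of_le (inf_le_left : φ ⊓ ψ ≤ φ) with h | h
  · exact bpa_disj_aux S box mi mii hχS h
  · have h2 : ψ ⊓ φ < ψ := by
      rw [inf_comm]
      rcases lt_or_eq_of_le (inf_le_right : φ ⊓ ψ ≤ ψ) with h2 | h2
      · exact h2
      · exact absurd (h ▸ h2 : φ = ψ) hne
    rw [inf_comm]
    exact bpa_disj_aux S box mi mii (inf_comm φ ψ ▸ hχS) h2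

/-- Coverage: `box φ ≤ ⊔_{ψ ∈ S, ψ ≤ φ} bpa ψ`, by strong induction on the
cardinality of `{ψ ∈ S | ψ ≤ φ}`. -/
lemma box_le_sup_bpa (S : Finset B) (box : B → B) :
    ∀ n : ℕ, ∀ φ ∈ S, (S.filter fun ψ => ψ ≤ φ).card ≤ n →
      box φ ≤ (S.filter fun ψ => ψ ≤ φ).sup (bpa S box) := by
  intro n
  induction n with
  | zero =>
    intro φ hφ hcard
    have hmem : φ ∈ S.filter fun ψ => ψ ≤ φ := Finset.mem_filter.2 ⟨hφ, le_rfl⟩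
    have := Finset.card_pos.2 ⟨φ, hmem⟩
    omega
  | succ n ih =>
    intro φ hφ hcard
    set X := (S.filter fun ψ => ψ < φ).sup box with hX
    have hsplit : box φ = (box φ ⊓ Xᶜ) ⊔ (box φ ⊓ X) := by
      rw [← inf_sup_left, compl_sup_eq_top, inf_top_eq]
    rw [hsplit]
    apply sup_le
    · exact Finset.le_sup (f := bpa S box) (Finset.mem_filter.2 ⟨hφ, le_rfl⟩)
    · refine inf_le_right.trans (Finset.sup_le ?_)
      intro χ hχ
      obtain ⟨hχS, hχφ⟩ := Finset.mem_filter.1 hχ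
      have hsub : (S.filter fun ψ => ψ ≤ χ) ⊆ (S.filter fun ψ => ψ ≤ φ).erase φ := by
        intro a ha
        obtain ⟨haS, haχ⟩ := Finset.mem_filter.1 ha
        refine Finset.mem_erase.2 ⟨?_, Finset.mem_filter.2 ⟨haS, haχ.trans hχφ.le⟩⟩
        rintro rfl
        exact absurd (haχ.trans_lt hχφ) (lt_irrefl _)
      have hcard' : (S.filter fun ψ => ψ ≤ χ).card ≤ n := by
        have := Finset.card_le_card hsub
        have h2 := Finset.card_erase_le (a := φ) (s := S.filter fun ψ => ψ ≤ φ)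
        have h3 : ((S.filter fun ψ => ψ ≤ φ).erase φ).card =
            (S.filter fun ψ => ψ ≤ φ).card - 1 :=
          Finset.card_erase_of_mem (Finset.mem_filter.2 ⟨hφ, le_rfl⟩)
        omega
      refine (ih χ hχS hcard').trans (Finset.sup_le ?_)
      intro a ha
      obtain ⟨haS, haχ⟩ := Finset.mem_filter.1 ha
      exact Finset.le_sup (Finset.mem_filter.2 ⟨haS, haχ.trans hχφ.le⟩)

lemma sup_bpa_eq_box (S : Finset B) (box : B → B)
    (mi : box ⊤ = ⊤) (mii : ∀ x y : B, box (xᶜ ⊔ y) ≤ (box x)ᶜ ⊔ box y)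
    {φ : B} (hφ : φ ∈ S) :
    (S.filter fun ψ => ψ ≤ φ).sup (bpa S box) = box φ := by
  apply le_antisymm
  · apply Finset.sup_le
    intro ψ hψ
    obtain ⟨hψS, hψφ⟩ := Finset.mem_filter.1 hψ
    exact inf_le_left.trans (box_mono box mi mii hψφ)
  · exact box_le_sup_bpa S box _ φ hφ le_rfl

lemma p_bot (p : B → ℝ) (hpadd : ∀ x y : B, x ⊓ y = ⊥ → p (x ⊔ y) = p x + p y) :
    p ⊥ = 0 := by
  have := hpadd ⊥ ⊥ (by simp)
  simp only [sup_idem] at this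
  linarith

lemma p_sup_disjoint (p : B → ℝ)
    (hpadd : ∀ x y : B, x ⊓ y = ⊥ → p (x ⊔ y) = p x + p y)
    (f : B → B) :
    ∀ s : Finset B, (∀ i ∈ s, ∀ j ∈ s, i ≠ j → f i ⊓ f j = ⊥) →
      p (s.sup f) = ∑ i ∈ s, p (f i) := by
  intro s
  induction s using Finset.cons_induction with
  | empty => intro _; simpa using p_bot p hpadd
  | cons a s ha ih =>
    intro hdisj
    rw [Finset.sup_cons, Finset.sum_cons]
    have hd : f a ⊓ s.sup f = ⊥ := by
      rw [Finset.sup_inf_distrib_left]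
      apply (Finset.sup_eq_bot_iff _ _).2
      intro b hb
      exact hdisj a (Finset.mem_cons_self a s) b (Finset.mem_cons_of_mem hb)
        (fun h => ha (h ▸ hb))
    rw [hpadd _ _ hd, ih (fun i hi j hj hij =>
      hdisj i (Finset.mem_cons_of_mem hi) j (Finset.mem_cons_of_mem hj) hij)]

end Aux

/-- With `Bel(φ) = p(□φ)` and `m(φ) = p(φ^□)`, one has
`Bel(φ) = ∑_{ψ ≤ φ} m(ψ)`, and equivalently `m(φ) = Bel(φ) − ∑_{ψ < φ} m(ψ)`. -/
theorem belief_eq_sum_bba {B : Type*} [BooleanAlgebra B]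
    (S : Finset B)
    (hmeet : ∀ x ∈ S, ∀ y ∈ S, x ⊓ y ∈ S)
    (htop : ⊤ ∈ S)
    (box : B → B)
    (mi : box ⊤ = ⊤)
    (mii : ∀ x y : B, box (xᶜ ⊔ y) ≤ (box x)ᶜ ⊔ box y)
    (p : B → ℝ)
    (hp0 : ∀ x : B, 0 ≤ p x)
    (hptop : p ⊤ = 1)
    (hpadd : ∀ x y : B, x ⊓ y = ⊥ → p (x ⊔ y) = p x + p y) :
    ∀ φ ∈ S,
      p (box φ) = ∑ ψ ∈ S.filter fun ψ => ψ ≤ φ, p (bpa S box ψ) ∧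
        p (bpa S box φ) = p (box φ) - ∑ ψ ∈ S.filter fun ψ => ψ < φ, p (bpa S box ψ) := by
  intro φ hφ
  have hdisj : ∀ i ∈ S.filter fun ψ => ψ ≤ φ, ∀ j ∈ S.filter fun ψ => ψ ≤ φ,
      i ≠ j → bpa S box i ⊓ bpa S box j = ⊥ := by
    intro i hi j hj hij
    exact bpa_disj S hmeet box mi mii (Finset.mem_filter.1 hi).1
      (Finset.mem_filter.1 hj).1 hij
  have hkey : p (box φ) = ∑ ψ ∈ S.filter fun ψ => ψ ≤ φ, p (bpa S box ψ) := by
    rw [← sup_bpa_eq_box S box mi mii hφ]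
    exact p_sup_disjoint p hpadd (bpa S box) _ hdisj
  refine ⟨hkey, ?_⟩
  have hsplit : (S.filter fun ψ => ψ ≤ φ) =
      insert φ (S.filter fun ψ => ψ < φ) := by
    ext a
    simp only [Finset.mem_filter, Finset.mem_insert]
    constructor
    · rintro ⟨haS, hle⟩
      rcases eq_or_lt_of_le hle with h | h
      · exact Or.inl h
      · exact Or.inr ⟨haS, h⟩
    · rintro (rfl | ⟨haS, hlt⟩)
      · exact ⟨hφ, le_rfl⟩
      · exact ⟨haS, hlt.le⟩
  have hnotmem : φ ∉ (S.filter fun ψ => ψ < φ) := by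
    simp [Finset.mem_filter]
  rw [hkey, hsplit, Finset.sum_insert hnotmem]
  ring
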